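/- Let N = p_1 * ... * p_t be a squarefree integer which is a product of t >= 3 distinct primes. Then the greatest common divisor of the integers N/delta + (-1)^{t-1} * delta, taken over all positive divisors delta of N, equals gcd(N + (-1)^{t-1}, p_1^2 - 1, ..., p_t^2 - 1). -/
import Mathlib

/-- Auxiliary: if `H` divides `q^2 - 1` for every prime `q` dividing `N`, then
`H` divides `d^2 - 1` for every nonzero divisor `d` of `N`. -/
lemma aux_dvd_sq_sub_one (H : ℤ) (N : ℕ)
    (hq : ∀ q : ℕ, q.Prime → q ∣ N → H ∣ (q : ℤ) ^ 2 - 1) :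
    ∀ d : ℕ, d ∣ N → d ≠ 0 → H ∣ (d : ℤ) ^ 2 - 1 := by
  intro d
  induction d using Nat.strong_induction_on with
  | _ d ih =>
    intro hdN hd0
    rcases eq_or_ne d 1 with rfl | h1
    · simp
    · obtain ⟨q, hqp, hqd⟩ := Nat.exists_prime_and_dvd h1
      obtain ⟨e, rfl⟩ := hqd
      have he0 : e ≠ 0 := by rintro rfl; simp at hd0
      have hlt : e < q * e := by
        have := hqp.two_le
        have := Nat.pos_of_ne_zero he0
        nlinarith
      have hH1 := hq q hqp (dvd_trans (Dvd.intro e rfl) hdN)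
      have hH2 := ih e hlt (dvd_trans (Dvd.intro_left q rfl) hdN) he0
      obtain ⟨a, ha⟩ := hH1
      obtain ⟨b, hb⟩ := hH2
      exact ⟨(e : ℤ) ^ 2 * a + b, by
        push_cast
        linear_combination (e : ℤ) ^ 2 * ha + hb⟩

/-- For `N = p_1 ⋯ p_t` squarefree with `t ≥ 3` distinct prime factors, the gcd of the
integers `N/δ + (-1)^(t-1) δ` over all positive divisors `δ` of `N` equals
`gcd(N + (-1)^(t-1), p_i^2 - 1 : 1 ≤ i ≤ t)`. -/
theorem gcd_divisors_eq (t : ℕ) (ht : 3 ≤ t) (p : Fin t → ℕ)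
    (hp : ∀ i, (p i).Prime) (hinj : Function.Injective p)
    (N : ℕ) (hN : N = ∏ j, p j) :
    N.divisors.gcd (fun d => ((N / d : ℕ) : ℤ) + (-1) ^ (t - 1) * (d : ℤ)) =
      gcd ((N : ℤ) + (-1) ^ (t - 1)) (Finset.univ.gcd fun j => (p j : ℤ) ^ 2 - 1) := by
  set ε : ℤ := (-1) ^ (t - 1) with hεdef
  have hε2 : ε * ε = 1 := by rw [hεdef, ← mul_pow]; norm_num
  clear_value ε
  have hNpos : 0 < N := by
    rw [hN]; exact Finset.prod_pos fun j _ => (hp j).pos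
  have hN0 : N ≠ 0 := hNpos.ne'
  set F : ℕ → ℤ := fun d => ((N / d : ℕ) : ℤ) + ε * d with hF
  set G := N.divisors.gcd F with hG
  set H := gcd ((N : ℤ) + ε) (Finset.univ.gcd fun j => (p j : ℤ) ^ 2 - 1) with hH
  -- key computation: for d ∣ N, d * F d = N + ε * d^2
  have key : ∀ d : ℕ, d ∣ N → (d : ℤ) * F d = (N : ℤ) + ε * (d : ℤ) ^ 2 := by
    intro d hd
    have h1 : ((N / d : ℕ) : ℤ) * (d : ℤ) = (N : ℤ) := by
      rw [← Nat.cast_mul, Nat.div_mul_cancel hd]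
    simp only [hF]
    ring_nf
    linear_combination h1
  -- membership facts
  have hmem : ∀ d : ℕ, d ∣ N → d ∈ N.divisors := fun d hd =>
    Nat.mem_divisors.mpr ⟨hd, hN0⟩
  have hF1 : F 1 = (N : ℤ) + ε := by simp [hF]
  -- every prime dividing N is some p j
  have hprime_eq : ∀ q : ℕ, q.Prime → q ∣ N → ∃ j, q = p j := by
    intro q hqp hqN
    rw [hN] at hqN
    obtain ⟨j, _, hj⟩ := hqp.prime.exists_mem_finset_dvd hqN
    exact ⟨j, (Nat.prime_dvd_prime_iff_eq hqp (hp j)).mp hj⟩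
  -- G ∣ H
  have hGH : G ∣ H := by
    apply dvd_gcd
    · have := Finset.gcd_dvd (f := F) (hmem 1 (one_dvd N))
      rwa [hF1] at this
    · apply Finset.dvd_gcd
      intro j _
      have hpj : p j ∣ N := by
        rw [hN]; exact Finset.dvd_prod_of_mem p (Finset.mem_univ j)
      have h1 : G ∣ F (p j) := Finset.gcd_dvd (hmem _ hpj)
      have h2 : G ∣ F 1 := Finset.gcd_dvd (hmem 1 (one_dvd N))
      have hkey := key (p j) hpj
      have : (p j : ℤ) ^ 2 - 1 = ε * ((p j : ℤ) * F (p j)) - ε * F 1 := by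
        rw [hkey, hF1]
        linear_combination -(((p j : ℤ) ^ 2 - 1) * hε2)
      rw [this]
      exact dvd_sub ((h1.mul_left _).mul_left ε) (h2.mul_left ε)
  -- H ∣ G
  have hHG : H ∣ G := by
    apply Finset.dvd_gcd
    intro d hd
    obtain ⟨hdN, -⟩ := Nat.mem_divisors.mp hd
    have hd0 : d ≠ 0 := fun h => hN0 (Nat.eq_zero_of_zero_dvd (h ▸ hdN))
    -- H ∣ d^2 - 1
    have hq : ∀ q : ℕ, q.Prime → q ∣ N → H ∣ (q : ℤ) ^ 2 - 1 := by
      intro q hqp hqN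
      obtain ⟨j, rfl⟩ := hprime_eq q hqp hqN
      exact dvd_trans (gcd_dvd_right _ _) (Finset.gcd_dvd (Finset.mem_univ j))
    have hd2 : H ∣ (d : ℤ) ^ 2 - 1 := aux_dvd_sq_sub_one H N hq d hdN hd0
    obtain ⟨k, hk⟩ := hd2
    have hd2 : H ∣ (d : ℤ) ^ 2 - 1 := ⟨k, hk⟩
    have hcop : IsCoprime H (d : ℤ) := ⟨-k, d, by linear_combination hk⟩
    have hdvd : H ∣ (d : ℤ) * F d := by
      rw [key d hdN]
      have h1 : H ∣ (N : ℤ) + ε := gcd_dvd_left _ _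
      have h2 : H ∣ ε * ((d : ℤ) ^ 2 - 1) := hd2.mul_left ε
      have : (N : ℤ) + ε * (d : ℤ) ^ 2 = ((N : ℤ) + ε) + ε * ((d : ℤ) ^ 2 - 1) := by ring
      rw [this]
      exact dvd_add h1 h2
    exact hcop.dvd_of_dvd_mul_left hdvd
  have hn1 : normalize G = G := by rw [hG]; exact Finset.normalize_gcd
  have hn2 : normalize H = H := by rw [hH]; exact normalize_gcd _ _
  exact dvd_antisymm_of_normalize_eq hn1 hn2 hGH hHG
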